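/- For any finite abelian 2-groups A and B (either possibly trivial), the groups C_2 × A and C_4 × A × A × B × B_2 are each the group of units of some ring of characteristic 0, where B_2 = {x^2 : x ∈ B} is the subgroup of squares of B. -/

import Mathlib

open TrivSqZeroExt

section UnitsTsze

variable {S : Type} [CommRing S] {M : Type} [AddCommGroup M] [Module S M]
  [Module Sᵐᵒᵖ M] [IsCentralScalar S M]

/-- The first-coordinate projection on units of a trivial square-zero extension. -/
def tszeUnitsFst : (TrivSqZeroExt S M)ˣ →* Sˣ :=
  Units.map { toFun := fst, map_one' := fst_one, map_mul' := fst_mul }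

@[simp] lemma tszeUnitsFst_coe (u : (TrivSqZeroExt S M)ˣ) :
    (tszeUnitsFst u : S) = fst (u : TrivSqZeroExt S M) := rfl

private lemma smul_aux (a b : Sˣ) (m n : M) :
    (((a * b)⁻¹ : Sˣ) : S) • ((a : S) • n + (b : S) • m)
      = ((a⁻¹ : Sˣ) : S) • m + ((b⁻¹ : Sˣ) : S) • n := by
  have h1 : ((b⁻¹ : Sˣ) : S) * ((a⁻¹ : Sˣ) : S) * (a : S) = ((b⁻¹ : Sˣ) : S) := by
    rw [mul_assoc, Units.inv_mul, mul_one]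
  have h2 : ((b⁻¹ : Sˣ) : S) * ((a⁻¹ : Sˣ) : S) * (b : S) = ((a⁻¹ : Sˣ) : S) := by
    rw [mul_comm ((b⁻¹ : Sˣ) : S) ((a⁻¹ : Sˣ) : S), mul_assoc, Units.inv_mul, mul_one]
  rw [mul_inv_rev, Units.val_mul, smul_add, smul_smul, smul_smul, h1, h2, add_comm]

/-- The inverse map: a unit of `S` together with an element of `M` gives a unit of the
trivial square-zero extension. -/
def tszeUnitsInv (p : Sˣ × Multiplicative M) : (TrivSqZeroExt S M)ˣ where
  val := inl (p.1 : S) + inr ((p.1 : S) • p.2.toAdd)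
  inv := inl ((p.1⁻¹ : Sˣ) : S) + inr (-(((p.1⁻¹ : Sˣ) : S) • p.2.toAdd))
  val_inv := by
    apply TrivSqZeroExt.ext
    · simp
    · simp [smul_smul, op_smul_eq_smul, Units.mul_inv_cancel_left]
  inv_val := by
    apply TrivSqZeroExt.ext
    · simp
    · simp [smul_smul, op_smul_eq_smul, Units.inv_mul_cancel_left]

@[simp] lemma tszeUnitsInv_val (p : Sˣ × Multiplicative M) :
    (tszeUnitsInv p : TrivSqZeroExt S M) = inl (p.1 : S) + inr ((p.1 : S) • p.2.toAdd) := rfl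

@[simp] lemma tszeUnitsFst_tszeUnitsInv (p : Sˣ × Multiplicative M) :
    tszeUnitsFst (tszeUnitsInv p) = p.1 := by
  apply Units.ext; simp

/-- Units of a trivial square-zero extension over a commutative ring. -/
def tszeUnitsEquiv : (TrivSqZeroExt S M)ˣ ≃* Sˣ × Multiplicative M where
  toFun u := (tszeUnitsFst u,
    Multiplicative.ofAdd ((((tszeUnitsFst u)⁻¹ : Sˣ) : S) • snd (u : TrivSqZeroExt S M)))
  invFun := tszeUnitsInv
  left_inv u := by
    apply Units.ext
    rw [tszeUnitsInv_val]
    apply TrivSqZeroExt.ext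
    · simp
    · dsimp only
      rw [toAdd_ofAdd, snd_add, snd_inl, snd_inr, zero_add, smul_smul, Units.mul_inv, one_smul]
  right_inv p := by
    refine Prod.ext (tszeUnitsFst_tszeUnitsInv p) ?_
    dsimp only
    rw [tszeUnitsFst_tszeUnitsInv, tszeUnitsInv_val, snd_add, snd_inl, snd_inr, zero_add,
      smul_smul, Units.inv_mul, one_smul, ofAdd_toAdd]
  map_mul' u v := by
    refine Prod.ext (map_mul _ _ _) ?_
    show Multiplicative.ofAdd _ = Multiplicative.ofAdd _ * Multiplicative.ofAdd _
    rw [← ofAdd_add]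
    congr 1
    have hs : snd ((u * v : (TrivSqZeroExt S M)ˣ) : TrivSqZeroExt S M)
        = ((tszeUnitsFst u : Sˣ) : S) • snd (v : TrivSqZeroExt S M)
          + ((tszeUnitsFst v : Sˣ) : S) • snd (u : TrivSqZeroExt S M) := by
      rw [Units.val_mul, snd_mul, op_smul_eq_smul]; rfl
    rw [map_mul, hs, smul_aux]

end UnitsTsze

open TrivSqZeroExt

lemma tszeCharZero {S : Type} [AddMonoidWithOne S] [CharZero S] {M : Type} [AddMonoid M] :
    CharZero (TrivSqZeroExt S M) where
  cast_injective m n h := by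
    have : ((m : TrivSqZeroExt S M)).fst = ((n : TrivSqZeroExt S M)).fst := by rw [h]
    rw [fst_natCast, fst_natCast] at this
    exact Nat.cast_injective this

def intUnitsEquiv : ℤˣ ≃* Multiplicative (ZMod 2) where
  toFun u := if u = 1 then 1 else Multiplicative.ofAdd 1
  invFun x := if x = 1 then 1 else -1
  left_inv u := by
    rcases Int.units_eq_one_or u with h | h <;> subst h <;> simp <;> decide
  right_inv x := by
    have : x = 1 ∨ x = Multiplicative.ofAdd 1 := by revert x; decide
    rcases this with h | h <;> subst h <;> simp <;> decide
  map_mul' u v := by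
    rcases Int.units_eq_one_or u with h | h <;> rcases Int.units_eq_one_or v with h' | h' <;>
      subst h <;> subst h' <;> simp <;> decide


open Zsqrtd GaussianInt

/-- The imaginary unit as a unit of the Gaussian integers. -/
def iUnit : GaussianIntˣ where
  val := ⟨0, 1⟩
  inv := ⟨0, -1⟩
  val_inv := by ext <;> simp [Zsqrtd.re_mul, Zsqrtd.im_mul]
  inv_val := by ext <;> simp [Zsqrtd.re_mul, Zsqrtd.im_mul]

lemma iUnit_sq : (iUnit : GaussianInt) ^ 2 = -1 := by
  show (⟨0,1⟩ * ⟨0,1⟩ * 1 : GaussianInt) = -1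
  ext <;> simp [Zsqrtd.re_mul, Zsqrtd.im_mul]

lemma iUnit_pow_four : iUnit ^ 4 = 1 := by
  apply Units.ext
  have : ((iUnit ^ 4 : GaussianIntˣ) : GaussianInt) = ((iUnit : GaussianInt) ^ 2) ^ 2 := by
    rw [← pow_mul]; push_cast; ring
  rw [this, iUnit_sq]; ring_nf; rfl

lemma gaussian_unit_cases (u : GaussianIntˣ) :
    (u : GaussianInt) = 1 ∨ (u : GaussianInt) = ⟨0, 1⟩ ∨
    (u : GaussianInt) = -1 ∨ (u : GaussianInt) = ⟨0, -1⟩ := by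
  have hn : (u : GaussianInt).norm = 1 :=
    (Zsqrtd.norm_eq_one_iff' (by norm_num) _).mpr u.isUnit
  rw [Zsqrtd.norm_def] at hn
  set a := (u : GaussianInt).re with ha
  set b := (u : GaussianInt).im with hb
  have h : a * a + b * b = 1 := by linarith
  have ha1 : -1 ≤ a := by nlinarith [mul_self_nonneg a, mul_self_nonneg b]
  have ha2 : a ≤ 1 := by nlinarith [mul_self_nonneg a, mul_self_nonneg b]
  have hb1 : -1 ≤ b := by nlinarith [mul_self_nonneg a, mul_self_nonneg b]
  have hb2 : b ≤ 1 := by nlinarith [mul_self_nonneg a, mul_self_nonneg b]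
  interval_cases a <;> interval_cases b
  · omega
  · right; right; left; ext <;> simp <;> omega
  · omega
  · right; right; right; ext <;> simp <;> omega
  · omega
  · right; left; ext <;> simp <;> omega
  · omega
  · left; ext <;> simp <;> omega
  · omega

lemma iUnit_pow_two_val : ((iUnit ^ 2 : GaussianIntˣ) : GaussianInt) = -1 := by
  rw [Units.val_pow_eq_pow_val, iUnit_sq]

lemma iUnit_pow_three_val : ((iUnit ^ 3 : GaussianIntˣ) : GaussianInt) = ⟨0, -1⟩ := by
  rw [Units.val_pow_eq_pow_val, pow_succ, ← Units.val_pow_eq_pow_val, iUnit_pow_two_val]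
  ext <;> simp [Zsqrtd.re_mul, Zsqrtd.im_mul] <;> rfl

/-- The homomorphism `ZMod 4 → GaussianIntˣ` sending `1` to `i`. -/
def gaussUnitsHom : Multiplicative (ZMod 4) →* GaussianIntˣ :=
  AddMonoidHom.toMultiplicativeLeft
    (ZMod.lift 4 ⟨MonoidHom.toAdditiveRight (zpowersHom GaussianIntˣ iUnit), by
      show Additive.ofMul (iUnit ^ (4 : ℤ)) = 0
      rw [show (4 : ℤ) = ((4 : ℕ) : ℤ) from rfl, zpow_natCast, iUnit_pow_four]; rfl⟩)

lemma gaussUnitsHom_intCast (k : ℤ) :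
    gaussUnitsHom (Multiplicative.ofAdd ((k : ZMod 4))) = iUnit ^ k := by
  simp only [gaussUnitsHom, AddMonoidHom.coe_toMultiplicativeLeft, Function.comp_apply,
    toAdd_ofAdd, ZMod.lift_coe, MonoidHom.coe_toAdditiveRight]
  rfl

lemma gaussUnitsHom_bijective : Function.Bijective gaussUnitsHom := by
  constructor
  · rw [injective_iff_map_eq_one]
    intro x hx
    have hy : x.toAdd = 0 ∨ x.toAdd = 1 ∨ x.toAdd = 2 ∨ x.toAdd = 3 := by
      have : ∀ y : ZMod 4, y = 0 ∨ y = 1 ∨ y = 2 ∨ y = 3 := by decide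
      exact this _
    have hx' : gaussUnitsHom (Multiplicative.ofAdd x.toAdd) = 1 := by
      rwa [ofAdd_toAdd]
    rcases hy with h | h | h | h
    · show x = Multiplicative.ofAdd 0
      rw [← h, ofAdd_toAdd]
    · exfalso
      rw [h, show (1 : ZMod 4) = ((1 : ℤ) : ZMod 4) by decide, gaussUnitsHom_intCast,
        zpow_one] at hx'
      have := congrArg (fun u : GaussianIntˣ => (u : GaussianInt).im) hx'
      simp at this
      exact absurd this (by decide)
    · exfalso
      rw [h, show (2 : ZMod 4) = ((2 : ℤ) : ZMod 4) by decide, gaussUnitsHom_intCast,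
        show (2 : ℤ) = ((2 : ℕ) : ℤ) by rfl, zpow_natCast] at hx'
      have := congrArg (fun u : GaussianIntˣ => (u : GaussianInt).re) hx'
      simp at this
      exact absurd this (by decide)
    · exfalso
      rw [h, show (3 : ZMod 4) = ((3 : ℤ) : ZMod 4) by decide, gaussUnitsHom_intCast,
        show (3 : ℤ) = ((3 : ℕ) : ℤ) by rfl, zpow_natCast] at hx'
      have := congrArg (fun u : GaussianIntˣ => (u : GaussianInt).im) hx'
      simp at this
      exact absurd this (by decide)
  · intro u
    rcases gaussian_unit_cases u with h | h | h | h
    · exact ⟨Multiplicative.ofAdd ((0 : ℤ) : ZMod 4), by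
        rw [gaussUnitsHom_intCast, zpow_zero]; exact Units.ext (by rw [h]; rfl)⟩
    · exact ⟨Multiplicative.ofAdd ((1 : ℤ) : ZMod 4), by
        rw [gaussUnitsHom_intCast, zpow_one]; exact Units.ext (by rw [h]; rfl)⟩
    · exact ⟨Multiplicative.ofAdd ((2 : ℤ) : ZMod 4), by
        rw [gaussUnitsHom_intCast, show (2 : ℤ) = ((2 : ℕ) : ℤ) by rfl, zpow_natCast]
        exact Units.ext (by rw [h, iUnit_pow_two_val])⟩
    · exact ⟨Multiplicative.ofAdd ((3 : ℤ) : ZMod 4), by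
        rw [gaussUnitsHom_intCast, show (3 : ℤ) = ((3 : ℕ) : ℤ) by rfl, zpow_natCast]
        exact Units.ext (by rw [h, iUnit_pow_three_val])⟩

/-- The units of the Gaussian integers form a cyclic group of order 4. -/
noncomputable def gaussUnitsEquiv : GaussianIntˣ ≃* Multiplicative (ZMod 4) :=
  (MulEquiv.ofBijective gaussUnitsHom gaussUnitsHom_bijective).symm


section OpModule

variable (S : Type) [CommRing S] (M : Type) [AddCommGroup M] [Module S M]

/-- The opposite-module structure on a module over a commutative ring. -/
def opModule : Module Sᵐᵒᵖ M where
  smul z m := z.unop • m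
  one_smul m := one_smul S m
  mul_smul z w m := by
    show (z * w).unop • m = z.unop • w.unop • m
    rw [MulOpposite.unop_mul, mul_comm, mul_smul]
  smul_zero z := smul_zero z.unop
  smul_add z x y := smul_add z.unop x y
  add_smul z w m := add_smul z.unop w.unop m
  zero_smul m := zero_smul S m

lemma opModule_isCentral :
    letI := opModule S M
    IsCentralScalar S M :=
  letI := opModule S M
  ⟨fun _ _ => rfl⟩

end OpModule

section JModule

variable {N : Type} [AddCommGroup N]

/-- A `ℤ[i]`-module structure from an additive endomorphism squaring to `-1`. -/
def jModule (e : N →+ N) (he : ∀ n, e (e n) = -n) : Module GaussianInt N where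
  smul z n := z.re • n + z.im • e n
  one_smul n := by
    show (1 : GaussianInt).re • n + (1 : GaussianInt).im • e n = n
    simp
  mul_smul z w n := by
    show (z * w).re • n + (z * w).im • e n
      = z.re • (w.re • n + w.im • e n) + z.im • e (w.re • n + w.im • e n)
    rw [Zsqrtd.re_mul, Zsqrtd.im_mul, map_add, map_zsmul, map_zsmul, he]
    simp only [smul_add, smul_smul, add_smul, smul_neg, sub_smul, neg_smul]
    push_cast
    ring_nf
    simp only [smul_eq_mul, mul_smul, neg_one_mul, neg_smul]
    abel
  smul_zero z := by
    show z.re • (0 : N) + z.im • e 0 = 0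
    simp
  smul_add z x y := by
    show z.re • (x + y) + z.im • e (x + y) = (z.re • x + z.im • e x) + (z.re • y + z.im • e y)
    rw [map_add]
    simp only [smul_add]
    abel
  add_smul z w n := by
    show (z + w).re • n + (z + w).im • e n = (z.re • n + z.im • e n) + (w.re • n + w.im • e n)
    rw [Zsqrtd.re_add, Zsqrtd.im_add]
    simp only [add_smul]
    abel
  zero_smul n := by
    show (0 : GaussianInt).re • n + (0 : GaussianInt).im • e n = 0
    simp

end JModule


variable (B : Type) [CommGroup B]

/-- The diagonal subgroup of square-one elements. -/
def diag2 : Subgroup (B × B) where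
  carrier := {p | p.2 = p.1 ∧ p.1 * p.1 = 1}
  one_mem' := ⟨rfl, one_mul 1⟩
  mul_mem' := by
    rintro ⟨x, y⟩ ⟨z, w⟩ ⟨h1, h2⟩ ⟨h3, h4⟩
    dsimp at *
    subst h1; subst h3
    exact ⟨rfl, by rw [mul_mul_mul_comm, h2, h4, one_mul]⟩
  inv_mem' := by
    rintro ⟨x, y⟩ ⟨h1, h2⟩
    dsimp at *
    subst h1
    exact ⟨rfl, by rw [← mul_inv_rev, h2, inv_one]⟩

/-- The quotient of `B × B` by the diagonal square-one subgroup. -/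
abbrev quotDiag2 : Type := (B × B) ⧸ diag2 B

/-- Multiplication by `i` on the quotient. -/
def quotJ : quotDiag2 B →* quotDiag2 B :=
  QuotientGroup.map (diag2 B) (diag2 B)
    { toFun := fun p => (p.2⁻¹, p.1)
      map_one' := by simp
      map_mul' := fun p q => by simp [mul_inv_rev, mul_comm] }
    (by
      rintro ⟨x, y⟩ ⟨h1, h2⟩
      dsimp at *
      constructor
      · show x = y⁻¹
        rw [h1]
        exact eq_inv_of_mul_eq_one_left h2
      · show y⁻¹ * y⁻¹ = 1
        rw [← mul_inv_rev, h1, h2, inv_one])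

lemma quotJ_mk (x y : B) :
    quotJ B (((x, y) : B × B) : quotDiag2 B) = (((y⁻¹, x) : B × B) : quotDiag2 B) := by
  simp [quotJ, QuotientGroup.map_mk]

lemma quotJ_sq (q : quotDiag2 B) : quotJ B (quotJ B q) = q⁻¹ := by
  induction q using QuotientGroup.induction_on with
  | H p =>
    rcases p with ⟨x, y⟩
    rw [quotJ_mk, quotJ_mk]
    rw [← QuotientGroup.mk_inv]
    rfl

/-- The map `B × B → B × B₂`, `(x, y) ↦ (x y⁻¹, y²)`. -/
def toSquares : B × B →* B × (powMonoidHom 2 : B →* B).range where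
  toFun p := ((p.1 * p.2⁻¹ : B), (⟨p.2 ^ 2, ⟨p.2, rfl⟩⟩ : (powMonoidHom 2 : B →* B).range))
  map_one' := by ext <;> simp
  map_mul' p q := by
    ext
    · show p.1 * q.1 * (p.2 * q.2)⁻¹ = p.1 * p.2⁻¹ * (q.1 * q.2⁻¹)
      simp [mul_inv_rev, mul_comm, mul_left_comm, mul_assoc]
    · show (p.2 * q.2) ^ 2 = p.2 ^ 2 * q.2 ^ 2
      rw [mul_pow]

lemma toSquares_surjective : Function.Surjective (toSquares B) := by
  rintro ⟨b, ⟨c, y, rfl⟩⟩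
  refine ⟨(b * y, y), ?_⟩
  ext
  · show b * y * y⁻¹ = b
    rw [mul_inv_cancel_right]
  · show y ^ 2 = powMonoidHom 2 y
    rfl

lemma toSquares_ker : MonoidHom.ker (toSquares B) = diag2 B := by
  ext ⟨x, y⟩
  constructor
  · intro h
    have h1 : x * y⁻¹ = 1 := congrArg Prod.fst h
    have h2 : y ^ 2 = 1 := congrArg (fun p => (p.2 : B)) h
    have hxy : x = y := by rwa [mul_inv_eq_one] at h1
    subst hxy
    exact ⟨rfl, by rw [← pow_two]; exact h2⟩
  · rintro ⟨h1, h2⟩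
    dsimp at h1 h2
    refine Prod.ext ?_ (Subtype.ext ?_)
    · show x * y⁻¹ = 1
      rw [h1, mul_inv_cancel]
    · show y ^ 2 = 1
      rw [pow_two, h1]
      exact h2

/-- The isomorphism `(B × B)/diag2 ≃* B × B₂`. -/
noncomputable def quotDiag2Equiv :
    quotDiag2 B ≃* B × (powMonoidHom 2 : B →* B).range :=
  ((QuotientGroup.quotientMulEquivOfEq (toSquares_ker B)).symm).trans
    (QuotientGroup.quotientKerEquivOfSurjective (toSquares B) (toSquares_surjective B))

section Assemble

variable (A : Type) [CommGroup A]

/-- The complex structure on `Additive (A × A)`. -/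
def rotJ : Additive (A × A) →+ Additive (A × A) where
  toFun n := Additive.ofMul (((Additive.toMul n).2⁻¹, (Additive.toMul n).1) : A × A)
  map_zero' := congrArg Additive.ofMul (Prod.ext inv_one rfl)
  map_add' p q := congrArg Additive.ofMul (Prod.ext (mul_inv _ _) rfl)

lemma rotJ_sq (n : Additive (A × A)) : rotJ A (rotJ A n) = -n := rfl

end Assemble

/-- For any finite abelian 2-groups `A` and `B`, the groups `C₂ × A` and
`C₄ × A × A × B × B₂` (where `B₂` is the subgroup of squares of `B`) are each the group
of units of a ring of characteristic 0. -/
theorem fuchs_char_zero_realizable (A B : Type) [CommGroup A] [Fintype A]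
    [CommGroup B] [Fintype B]
    (hA : ∃ e : ℕ, Fintype.card A = 2 ^ e) (hB : ∃ e : ℕ, Fintype.card B = 2 ^ e) :
    (∃ (R : Type) (_ : Ring R), CharZero R ∧
      Nonempty (Rˣ ≃* Multiplicative (ZMod 2) × A)) ∧
    (∃ (R : Type) (_ : Ring R), CharZero R ∧
      Nonempty (Rˣ ≃* Multiplicative (ZMod 4) × A × A × B ×
        (powMonoidHom 2 : B →* B).range)) := by
  constructor
  · -- `ℤ ⊕ A` with zero multiplication on `A`
    letI : Module ℤᵐᵒᵖ (Additive A) := opModule ℤ (Additive A)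
    letI : IsCentralScalar ℤ (Additive A) := opModule_isCentral ℤ (Additive A)
    refine ⟨TrivSqZeroExt ℤ (Additive A), inferInstance, tszeCharZero, ⟨?_⟩⟩
    exact tszeUnitsEquiv.trans
      (MulEquiv.prodCongr intUnitsEquiv (MulEquiv.multiplicativeAdditive A))
  · -- `ℤ[i] ⊕ M` with zero multiplication on `M`, where `M ≅ A × A × B × B₂` as a group
    letI : Module GaussianInt (Additive (A × A) × Additive (quotDiag2 B)) :=
      jModule ((rotJ A).prodMap (MonoidHom.toAdditive (quotJ B)))
        (fun n => Prod.ext (rotJ_sq A n.1) (quotJ_sq B (Additive.toMul n.2)))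
    letI : Module GaussianIntᵐᵒᵖ (Additive (A × A) × Additive (quotDiag2 B)) :=
      opModule GaussianInt _
    letI : IsCentralScalar GaussianInt (Additive (A × A) × Additive (quotDiag2 B)) :=
      opModule_isCentral GaussianInt _
    refine ⟨TrivSqZeroExt GaussianInt (Additive (A × A) × Additive (quotDiag2 B)),
      inferInstance, tszeCharZero, ⟨?_⟩⟩
    refine tszeUnitsEquiv.trans (MulEquiv.prodCongr gaussUnitsEquiv ?_)
    refine MulEquiv.trans (MulEquiv.prodMultiplicative (G := Additive (A × A))
      (H := Additive (quotDiag2 B))) ?_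
    refine (MulEquiv.prodCongr (MulEquiv.multiplicativeAdditive (A × A))
      ((MulEquiv.multiplicativeAdditive (quotDiag2 B)).trans (quotDiag2Equiv B))).trans ?_
    exact MulEquiv.prodAssoc
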